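/- For every n ≥ 4, the only redundant identifying code of the cycle C_n is the full vertex set; hence RED:IC(C_n) = n. -/

import Mathlib

open scoped symmDiff

variable {V : Type*}

/-- The closed neighborhood of a vertex. -/
def closedNbhd (G : SimpleGraph V) (v : V) : Set V := insert v (G.neighborSet v)

/-- A vertex `v` is at least `k`-dominated by `S`. -/
def kDominated (G : SimpleGraph V) (S : Set V) (k : ℕ) (v : V) : Prop :=
  k ≤ (closedNbhd G v ∩ S).ncard

/-- Two vertices `u` and `v` are `k`-distinguished by `S`. -/
def kDistinguished (G : SimpleGraph V) (S : Set V) (k : ℕ) (u v : V) : Prop :=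
  k ≤ ((closedNbhd G u ∩ S) ∆ (closedNbhd G v ∩ S)).ncard

/-- `S` is an identifying code of `G`. -/
def IsIC (G : SimpleGraph V) (S : Set V) : Prop :=
  (∀ v, kDominated G S 1 v) ∧ ∀ u v, u ≠ v → kDistinguished G S 1 u v

/-- `S` is a redundant identifying code of `G`. -/
def IsRedIC (G : SimpleGraph V) (S : Set V) : Prop :=
  (∀ v, kDominated G S 2 v) ∧ ∀ u v, u ≠ v → kDistinguished G S 2 u v

/-- The minimum cardinality of a redundant identifying code of `G`. -/
noncomputable def redIC (G : SimpleGraph V) : ℕ :=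
  sInf {n | ∃ S : Set V, IsRedIC G S ∧ S.ncard = n}

/-- The degree of a vertex, as the cardinality of its open neighborhood. -/
noncomputable def deg (G : SimpleGraph V) (v : V) : ℕ := (G.neighborSet v).ncard

/-- A leaf is a vertex of degree 1. -/
def IsLeaf (G : SimpleGraph V) (v : V) : Prop := deg G v = 1

/-- A support vertex is a vertex adjacent to a leaf. -/
def IsSupport (G : SimpleGraph V) (v : V) : Prop := ∃ u, G.Adj v u ∧ IsLeaf G u

/-- Two distinct vertices are closed twins if they have the same closed neighborhood. -/
def ClosedTwins (G : SimpleGraph V) (u v : V) : Prop :=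
  u ≠ v ∧ closedNbhd G u = closedNbhd G v

theorem stmt_13 (n : ℕ) (hn : 4 ≤ n) :
    (∀ S : Set (Fin n), IsRedIC (SimpleGraph.cycleGraph n) S → S = Set.univ) ∧
    redIC (SimpleGraph.cycleGraph n) = n := by
  obtain ⟨m, rfl⟩ : ∃ m, n = m + 2 := ⟨n - 2, by omega⟩
  have hm : 2 ≤ m := by omega
  letI := Fin.instCommRing (m + 2)
  have hcst : ∀ k : ℕ, k ≠ 0 → k ≤ 3 → ((k : ℕ) : Fin (m + 2)) ≠ 0 := by
    intro k hk0 hk3 h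
    rw [Fin.natCast_eq_zero] at h
    have := Nat.le_of_dvd (by omega) h
    omega
  have h1 : (1 : Fin (m + 2)) ≠ 0 := by
    have := hcst 1 (by norm_num) (by norm_num); exact_mod_cast this
  have h2 : (2 : Fin (m + 2)) ≠ 0 := by
    have := hcst 2 (by norm_num) (by norm_num); exact_mod_cast this
  have h3 : (3 : Fin (m + 2)) ≠ 0 := by
    have := hcst 3 (by norm_num) (by norm_num); exact_mod_cast this
  have d1 : ∀ v : Fin (m + 2), v ≠ v + 1 := fun v h => h1 (left_eq_add.mp h)
  have d2 : ∀ v : Fin (m + 2), v ≠ v + 2 := fun v h => h2 (left_eq_add.mp h)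
  have d3 : ∀ v : Fin (m + 2), v ≠ v + 3 := fun v h => h3 (left_eq_add.mp h)
  have d12 : ∀ v : Fin (m + 2), v + 1 ≠ v + 2 := by
    intro v h; exact d1 (v + 1) (h.trans (by ring))
  have s0 : ∀ v : Fin (m + 2), v - 1 ≠ v := by
    intro v h; exact d1 (v - 1) (h.trans (by ring))
  have s1 : ∀ v : Fin (m + 2), v - 1 ≠ v + 1 := by
    intro v h; exact d2 (v - 1) (h.trans (by ring))
  have s2 : ∀ v : Fin (m + 2), v - 1 ≠ v + 2 := by
    intro v h; exact d3 (v - 1) (h.trans (by ring))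
  set G := SimpleGraph.cycleGraph (m + 2) with hG
  have hN : ∀ v : Fin (m + 2), closedNbhd G v = {v - 1, v, v + 1} := by
    intro v
    rw [closedNbhd, hG, SimpleGraph.cycleGraph_neighborSet]
    ext x
    simp only [Set.mem_insert_iff, Set.mem_singleton_iff]
    tauto
  have main : ∀ S : Set (Fin (m + 2)), IsRedIC G S → S = Set.univ := by
    intro S hS
    by_contra hne
    obtain ⟨v, hv⟩ : ∃ v, v ∉ S := by
      by_contra h; push_neg at h; exact hne (Set.eq_univ_of_forall h)
    have hd := hS.2 (v + 1) (v + 2) (d12 v)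
    rw [kDistinguished] at hd
    have hA : closedNbhd G (v + 1) = {v, v + 1, v + 2} := by
      rw [hN]; congr 1 <;> ring_nf
    have hB : closedNbhd G (v + 2) = {v + 1, v + 2, v + 3} := by
      rw [hN]
      have e1 : v + 2 - 1 = v + 1 := by ring
      have e2 : v + 2 + 1 = v + 3 := by ring
      rw [e1, e2]
    have hsub : (closedNbhd G (v + 1) ∩ S) ∆ (closedNbhd G (v + 2) ∩ S) ⊆ {v + 3} := by
      rw [hA, hB]
      intro x hx
      rcases Set.mem_symmDiff.mp hx with ⟨⟨hx1, hx2⟩, hx3⟩ | ⟨⟨hx1, hx2⟩, hx3⟩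
      · exfalso
        rcases hx1 with rfl | rfl | rfl
        · exact hv hx2
        · exact hx3 ⟨Or.inl rfl, hx2⟩
        · exact hx3 ⟨Or.inr (Or.inl rfl), hx2⟩
      · rcases hx1 with rfl | rfl | rfl
        · exact absurd ⟨Or.inr (Or.inl rfl), hx2⟩ hx3
        · exact absurd ⟨Or.inr (Or.inr rfl), hx2⟩ hx3
        · rfl
    have hle := Set.ncard_le_ncard hsub (Set.finite_singleton _)
    rw [Set.ncard_singleton] at hle
    omega
  refine ⟨main, ?_⟩
  have huniv : IsRedIC G (Set.univ : Set (Fin (m + 2))) := by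
    constructor
    · intro v
      rw [kDominated, Set.inter_univ, hN]
      rw [Nat.succ_le_iff, Set.one_lt_ncard (Set.toFinite _)]
      exact ⟨v, by simp, v + 1, by simp, d1 v⟩
    · intro u w huw
      rw [kDistinguished, Set.inter_univ, Set.inter_univ]
      rw [Nat.succ_le_iff, Set.one_lt_ncard (Set.toFinite _)]
      have mem2 : ∀ a b : Fin (m + 2), a ∈ closedNbhd G b ↔ a = b - 1 ∨ a = b ∨ a = b + 1 := by
        intro a b; rw [hN]; simp [Set.mem_insert_iff]
      have adjcase : ∀ u : Fin (m + 2),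
          ∃ a ∈ closedNbhd G u ∆ closedNbhd G (u + 1),
            ∃ b ∈ closedNbhd G u ∆ closedNbhd G (u + 1), a ≠ b := by
        intro u
        have hBu : closedNbhd G (u + 1) = {u, u + 1, u + 2} := by
          rw [hN]
          have e1 : u + 1 - 1 = u := by ring
          have e2 : u + 1 + 1 = u + 2 := by ring
          rw [e1, e2]
        rw [hN, hBu]
        refine ⟨u - 1, Set.mem_symmDiff.mpr (Or.inl ⟨Or.inl rfl, ?_⟩),
          u + 2, Set.mem_symmDiff.mpr (Or.inr ⟨Or.inr (Or.inr rfl), ?_⟩), s2 u⟩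
        · rintro (h | h | h)
          · exact s0 u h
          · exact s1 u h
          · exact s2 u h
        · rintro (h | h | h)
          · exact s2 u h.symm
          · exact d2 u h.symm
          · exact d12 u h.symm
      by_cases hc1 : w = u + 1
      · subst hc1; exact adjcase u
      by_cases hc2 : u = w + 1
      · subst hc2
        obtain ⟨a, ha, b, hb, hab⟩ := adjcase w
        rw [symmDiff_comm] at ha hb
        exact ⟨a, ha, b, hb, hab⟩
      · refine ⟨u, Set.mem_symmDiff.mpr (Or.inl ⟨?_, ?_⟩),
          w, Set.mem_symmDiff.mpr (Or.inr ⟨?_, ?_⟩), huw⟩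
        · rw [mem2]; exact Or.inr (Or.inl rfl)
        · rw [mem2]
          rintro (h | h | h)
          · exact hc1 (by rw [h]; ring)
          · exact huw h
          · exact hc2 h
        · rw [mem2]; exact Or.inr (Or.inl rfl)
        · rw [mem2]
          rintro (h | h | h)
          · exact hc2 (by rw [h]; ring)
          · exact huw h.symm
          · exact hc1 h
  have hset : {k | ∃ S : Set (Fin (m + 2)), IsRedIC G S ∧ S.ncard = k} = {m + 2} := by
    ext k
    simp only [Set.mem_setOf_eq, Set.mem_singleton_iff]
    constructor
    · rintro ⟨S, hS, rfl⟩
      rw [main S hS, Set.ncard_univ, Nat.card_eq_fintype_card, Fintype.card_fin]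
    · rintro rfl
      exact ⟨Set.univ, huniv, by rw [Set.ncard_univ, Nat.card_eq_fintype_card, Fintype.card_fin]⟩
  rw [redIC, hset, csInf_singleton]
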